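/- Let k be a field of characteristic 5. Then the rational function 1/(x^3 · (x − 1)^3 · (x^2 + 4x + 2)^2) is exact, i.e., it is the formal derivative of some rational function in k(x). -/

import Mathlib

open Polynomial

/-- `HasDerivRF f g` means `g` is the formal derivative of the rational function `f` in `k(x)`:
if `f = u / v` with `v ≠ 0`, then `g = (u' v - u v') / v ^ 2`. -/
def HasDerivRF {k : Type*} [Field k] (f g : RatFunc k) : Prop :=
  ∃ u v : Polynomial k, v ≠ 0 ∧
    f = algebraMap (Polynomial k) (RatFunc k) u / algebraMap (Polynomial k) (RatFunc k) v ∧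
    g = algebraMap (Polynomial k) (RatFunc k)
          (Polynomial.derivative u * v - u * Polynomial.derivative v) /
        algebraMap (Polynomial k) (RatFunc k) (v ^ 2)

/-- A rational function is exact if it is the formal derivative of some rational function. -/
def IsExactRF {k : Type*} [Field k] (g : RatFunc k) : Prop := ∃ f : RatFunc k, HasDerivRF f g

set_option maxHeartbeats 1000000 in
/-- Over a field of characteristic 5, `1/(x^3 (x-1)^3 (x^2+4x+2)^2)` is exact. -/
theorem stmt8 {k : Type*} [Field k] [CharP k 5] :
    IsExactRF ((RatFunc.X ^ 3 * (RatFunc.X - 1) ^ 3 *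
      (RatFunc.X ^ 2 + 4 * RatFunc.X + 2) ^ 2)⁻¹ : RatFunc k) := by
  set u : Polynomial k := 2 * X + 4 with hu
  set v : Polynomial k := X ^ 2 * (X - 1) ^ 2 * (X ^ 2 + 4 * X + 2) with hv
  have h5k : (5 : k) = 0 := by exact_mod_cast CharP.cast_eq_zero k 5
  have h5 : (5 : Polynomial k) = 0 := by
    have h := congrArg C h5k
    simpa [map_ofNat] using h
  have hvmonic : v.Monic := by rw [hv]; monicity!
  have hvne : v ≠ 0 := hvmonic.ne_zero
  have hPmonic : (X ^ 3 * (X - 1) ^ 3 * (X ^ 2 + 4 * X + 2) ^ 2 : Polynomial k).Monic := by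
    monicity!
  have hPne : (X ^ 3 * (X - 1) ^ 3 * (X ^ 2 + 4 * X + 2) ^ 2 : Polynomial k) ≠ 0 :=
    hPmonic.ne_zero
  refine ⟨algebraMap (Polynomial k) (RatFunc k) u / algebraMap (Polynomial k) (RatFunc k) v,
    u, v, hvne, rfl, ?_⟩
  have hderiv : Polynomial.derivative u * v - u * Polynomial.derivative v
      = X ^ 2 - X := by
    rw [hu, hv]
    simp only [derivative_add, derivative_mul, derivative_pow, derivative_X, derivative_sub,
      derivative_one, derivative_ofNat, derivative_X_pow, C_eq_natCast, Nat.cast_ofNat, map_ofNat]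
    linear_combination (-2 * X ^ 6 - 8 * X ^ 5 - 2 * X ^ 4 + 16 * X ^ 3 - X ^ 2 - 3 * X :
      Polynomial k) * h5
  rw [hderiv]
  have halg : (RatFunc.X ^ 3 * (RatFunc.X - 1) ^ 3 *
      (RatFunc.X ^ 2 + 4 * RatFunc.X + 2) ^ 2 : RatFunc k)
      = algebraMap (Polynomial k) (RatFunc k)
        (X ^ 3 * (X - 1) ^ 3 * (X ^ 2 + 4 * X + 2) ^ 2) := by
    simp only [map_mul, map_pow, map_add, map_sub, map_one, map_ofNat, RatFunc.algebraMap_X]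
  rw [halg]
  have h1 : algebraMap (Polynomial k) (RatFunc k)
      (X ^ 3 * (X - 1) ^ 3 * (X ^ 2 + 4 * X + 2) ^ 2) ≠ 0 :=
    RatFunc.algebraMap_ne_zero hPne
  have h2 : algebraMap (Polynomial k) (RatFunc k) (v ^ 2) ≠ 0 :=
    RatFunc.algebraMap_ne_zero (pow_ne_zero 2 hvne)
  rw [eq_div_iff h2, inv_mul_eq_div, div_eq_iff h1, ← map_mul]
  congr 1
  rw [hv]; ring
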